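/- Optimal multilevel sample allocation: let L ∈ ℕ, let V_0, ..., V_L and h_0, ..., h_L be positive reals, and let ε > 0. Define N*_l = (2/ε²) √(V_l h_l) (Σ_{k=0}^{L} √(V_k/h_k)) for l = 0, ..., L. Then (i) Σ_{l=0}^{L} V_l/N*_l = ε²/2; (ii) Σ_{l=0}^{L} N*_l/h_l = (2/ε²)(Σ_{l=0}^{L} √(V_l/h_l))²; and (iii) for every choice of positive reals N_0, ..., N_L with Σ_{l=0}^{L} V_l/N_l ≤ ε²/2, one has Σ_{l=0}^{L} N_l/h_l ≥ (2/ε²)(Σ_{l=0}^{L} √(V_l/h_l))². In other words, N* minimizes the cost Σ N_l/h_l subject to the sampling-variance constraint Σ V_l/N_l ≤ ε²/2. -/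

import Mathlib

open MeasureTheory ProbabilityTheory

theorem optimal_multilevel_sample_allocation
    (L : ℕ) (V h : ℕ → ℝ)
    (hV : ∀ l ≤ L, 0 < V l) (hh : ∀ l ≤ L, 0 < h l)
    (ε : ℝ) (hε : 0 < ε)
    (Nstar : ℕ → ℝ)
    (hNstar : ∀ l ≤ L, Nstar l = 2 / ε ^ 2 * Real.sqrt (V l * h l)
      * ∑ k ∈ Finset.range (L + 1), Real.sqrt (V k / h k)) :
    (∑ l ∈ Finset.range (L + 1), V l / Nstar l = ε ^ 2 / 2) ∧
    (∑ l ∈ Finset.range (L + 1), Nstar l / h l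
      = 2 / ε ^ 2 * (∑ l ∈ Finset.range (L + 1), Real.sqrt (V l / h l)) ^ 2) ∧
    (∀ NN : ℕ → ℝ, (∀ l ≤ L, 0 < NN l) →
      (∑ l ∈ Finset.range (L + 1), V l / NN l ≤ ε ^ 2 / 2) →
      2 / ε ^ 2 * (∑ l ∈ Finset.range (L + 1), Real.sqrt (V l / h l)) ^ 2
        ≤ ∑ l ∈ Finset.range (L + 1), NN l / h l) := by
  set S := ∑ k ∈ Finset.range (L + 1), Real.sqrt (V k / h k) with hS
  have hSpos : 0 < S := by
    apply Finset.sum_pos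
    · intro k hk
      rw [Finset.mem_range, Nat.lt_succ_iff] at hk
      exact Real.sqrt_pos.mpr (div_pos (hV k hk) (hh k hk))
    · exact ⟨0, Finset.mem_range.mpr (Nat.succ_pos L)⟩
  have hε2 : (0:ℝ) < ε ^ 2 := by positivity
  have key : ∀ l ≤ L, Real.sqrt (V l * h l) = Real.sqrt (V l) * Real.sqrt (h l) ∧
      Real.sqrt (V l / h l) = Real.sqrt (V l) / Real.sqrt (h l) := fun l hl =>
    ⟨Real.sqrt_mul (hV l hl).le _, Real.sqrt_div (hV l hl).le _⟩
  have h1 : ∑ l ∈ Finset.range (L + 1), V l / Nstar l = ε ^ 2 / 2 := by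
    have : ∀ l ∈ Finset.range (L + 1),
        V l / Nstar l = ε ^ 2 / 2 * (Real.sqrt (V l / h l) / S) := by
      intro l hl
      rw [Finset.mem_range, Nat.lt_succ_iff] at hl
      rw [hNstar l hl, (key l hl).1, (key l hl).2]
      have hsv : Real.sqrt (V l) ≠ 0 := (Real.sqrt_ne_zero'.mpr (hV l hl))
      have hsh : Real.sqrt (h l) ≠ 0 := (Real.sqrt_ne_zero'.mpr (hh l hl))
      field_simp
      linear_combination (-1) * (Real.mul_self_sqrt (hV l hl).le)
    rw [Finset.sum_congr rfl this, ← Finset.mul_sum, ← Finset.sum_div, ← hS,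
      div_self hSpos.ne', mul_one]
  refine ⟨h1, ?_, ?_⟩
  · have : ∀ l ∈ Finset.range (L + 1),
        Nstar l / h l = 2 / ε ^ 2 * S * Real.sqrt (V l / h l) := by
      intro l hl
      rw [Finset.mem_range, Nat.lt_succ_iff] at hl
      rw [hNstar l hl, (key l hl).1, (key l hl).2]
      have hsh : Real.sqrt (h l) ≠ 0 := (Real.sqrt_ne_zero'.mpr (hh l hl))
      field_simp [(hh l hl).ne']
      linear_combination (Real.sqrt (V l)) * (Real.mul_self_sqrt (hh l hl).le)
    rw [Finset.sum_congr rfl this, ← Finset.mul_sum, ← hS]; ring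
  · intro NN hNN hcon
    have hCS : S ^ 2 ≤ (∑ l ∈ Finset.range (L + 1), V l / NN l) *
        ∑ l ∈ Finset.range (L + 1), NN l / h l := by
      apply Finset.sum_sq_le_sum_mul_sum_of_sq_eq_mul
      · intro i hi
        rw [Finset.mem_range, Nat.lt_succ_iff] at hi
        exact (div_pos (hV i hi) (hNN i hi)).le
      · intro i hi
        rw [Finset.mem_range, Nat.lt_succ_iff] at hi
        exact (div_pos (hNN i hi) (hh i hi)).le
      · intro i hi
        rw [Finset.mem_range, Nat.lt_succ_iff] at hi
        rw [Real.sq_sqrt (div_pos (hV i hi) (hh i hi)).le]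
        rw [div_mul_div_comm, mul_comm (NN i) (h i), mul_div_mul_right _ _ (hNN i hi).ne']
    have hcost : 0 ≤ ∑ l ∈ Finset.range (L + 1), NN l / h l := by
      apply Finset.sum_nonneg
      intro i hi
      rw [Finset.mem_range, Nat.lt_succ_iff] at hi
      exact (div_pos (hNN i hi) (hh i hi)).le
    have h2 : S ^ 2 ≤ ε ^ 2 / 2 * ∑ l ∈ Finset.range (L + 1), NN l / h l :=
      hCS.trans (mul_le_mul_of_nonneg_right hcon hcost)
    rw [div_mul_eq_mul_div, div_le_iff₀ hε2]
    nlinarith [h2]
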